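/- The inequality chain inf_{Q∈𝒬̄^N} sup_{τ∈𝒯̄^N} E_Q[φ̄^N_τ] ≤ sup_{Q∈𝒬̄^N} sup_{τ∈𝒯̄^N} E_Q[φ̄^N_τ] ≤ sup_{Q∈𝒬̄^{N+1}} E_Q[φ̄^{N+1}] holds; i.e., the value of the optimal stopping problem over 𝒬̄^N is dominated by the expectation of the European extension φ̄^{N+1} over 𝒬̄^{N+1}. -/

import Mathlib

open MeasureTheory Finset

noncomputable section

namespace Stmt8

variable {Ω : Type*}

/-- The enlarged sample space `Ω̄ⁿ = Ω × 𝕋ⁿ`, `𝕋 = {0,…,T}`. -/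
abbrev EnlOmega (Ω : Type*) (T n : ℕ) := Ω × (Fin n → Fin (T + 1))

/-- The enlarged filtration
`𝓕̄ⁿ_t = σ(𝓕_t × 𝕋ⁿ, {θᵏ ≤ s}, s = 0,…,t, k = 1,…,n)`. -/
def enlF (T n : ℕ) (ℱ : ℕ → MeasurableSpace Ω) (t : ℕ) :
    MeasurableSpace (EnlOmega Ω T n) :=
  MeasurableSpace.generateFrom
    ({A | ∃ B, MeasurableSet[ℱ t] B ∧ A = Prod.fst ⁻¹' B} ∪
     {A | ∃ (k : Fin n) (s : ℕ), s ≤ t ∧ A = {x : EnlOmega Ω T n | ((x.2 k : ℕ)) ≤ s}})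

/-- Trivial extension of a process from `Ω` to `Ω̄ⁿ`. -/
def extProc {E : Type*} (T n : ℕ) (X : ℕ → Ω → E) : ℕ → EnlOmega Ω T n → E :=
  fun t x => X t x.1

/-- Trivial extension of a random variable from `Ω` to `Ω̄ⁿ`. -/
def extFun {E : Type*} (T n : ℕ) (ψ : Ω → E) : EnlOmega Ω T n → E := fun x => ψ x.1

/-- Extension `h̄^{k,n}(ω,t¹,…,tⁿ) = h^k_{tᵏ}(ω)` of the shorted American options. -/
def extShort (T N n : ℕ) (hn : N ≤ n) (h : Fin N → ℕ → Ω → ℝ) (k : Fin N) :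
    EnlOmega Ω T n → ℝ :=
  fun x => h k ((x.2 (Fin.castLE hn k)) : ℕ) x.1

/-- Extension `φ̄^{N+1}(ω,t¹,…,t^{N+1}) = φ_{t^{N+1}}(ω)`. -/
def extLast (T N : ℕ) (φ : ℕ → Ω → ℝ) : EnlOmega Ω T (N + 1) → ℝ :=
  fun x => φ ((x.2 (Fin.last N)) : ℕ) x.1

/-- `𝒯̄ⁿ`: `𝔽̄ⁿ`-stopping times (with values in `𝕋 = {0,…,T}`). -/
def IsEnlStoppingTime (T n : ℕ) (ℱ : ℕ → MeasurableSpace Ω)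
    (τ : EnlOmega Ω T n → Fin (T + 1)) : Prop :=
  ∀ t : ℕ, MeasurableSet[enlF T n ℱ t] {x | (τ x : ℕ) ≤ t}

/-- `S` is a `Q`-martingale w.r.t. the filtration `𝔉` (time horizon `T`). -/
def IsMartingaleMeasure {X : Type*} [MeasurableSpace X] (T d : ℕ)
    (𝔉 : ℕ → MeasurableSpace X) (S : ℕ → X → Fin d → ℝ) (Q : Measure X) : Prop :=
  (∀ t, t ≤ T → Integrable (S t) Q) ∧
  ∀ t, t < T → ∀ A : Set X, MeasurableSet[𝔉 t] A →
    ∫ x in A, S (t + 1) x ∂Q = ∫ x in A, S t x ∂Q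

/-- `𝓛̄ⁿ`: liquidating strategies on the enlarged space. -/
def EnlLiq (T n : ℕ) (ℱ : ℕ → MeasurableSpace Ω) : Set (ℕ → EnlOmega Ω T n → ℝ) :=
  {μ | (∀ t, Measurable[enlF T n ℱ t] (μ t)) ∧ (∀ t x, 0 ≤ μ t x) ∧
    ∀ x, ∑ t ∈ Finset.range (T + 1), μ t x = 1}

/-- Gain from dynamic trading on the enlarged space. -/
def enlStockGain (T d n : ℕ) (H : ℕ → EnlOmega Ω T n → Fin d → ℝ)
    (S : ℕ → Ω → Fin d → ℝ) (x : EnlOmega Ω T n) : ℝ :=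
  ∑ t ∈ Finset.range T, ∑ i, H t x i * (S (t + 1) x.1 i - S t x.1 i)

/-- The payoff `Φ̄ⁿ_{α,β,γ}(H̄,a,b,μ̄,c)` of a semi-static strategy on the enlarged space. -/
def PhiBar (T d L M N n : ℕ) (hn : N ≤ n)
    (S : ℕ → Ω → Fin d → ℝ) (f : Fin L → Ω → ℝ) (g : Fin M → ℕ → Ω → ℝ)
    (h : Fin N → ℕ → Ω → ℝ) (α : Fin L → ℝ) (β : Fin M → ℝ) (γ : Fin N → ℝ)
    (H : ℕ → EnlOmega Ω T n → Fin d → ℝ) (a : Fin L → ℝ) (b : Fin M → ℝ)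
    (μ : Fin M → ℕ → EnlOmega Ω T n → ℝ) (c : Fin N → ℝ) (x : EnlOmega Ω T n) : ℝ :=
  enlStockGain T d n H S x + (∑ i, a i * (f i x.1 - α i))
    + (∑ j, b j * ((∑ t ∈ Finset.range (T + 1), g j t x.1 * μ j t x) - β j))
    - ∑ k, c k * (extShort T N n hn h k x - γ k)

variable [MeasurableSpace Ω]

/-- No arbitrage (NA) in `𝕄̄ⁿ` w.r.t. the prices `(α,β,γ)`. -/
def NAbar (T d L M N n : ℕ) (hn : N ≤ n) (ℱ : ℕ → MeasurableSpace Ω)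
    (S : ℕ → Ω → Fin d → ℝ) (f : Fin L → Ω → ℝ) (g : Fin M → ℕ → Ω → ℝ)
    (h : Fin N → ℕ → Ω → ℝ) (Pbar : Measure (EnlOmega Ω T n))
    (α : Fin L → ℝ) (β : Fin M → ℝ) (γ : Fin N → ℝ) : Prop :=
  ∀ H a b μ c, (∀ t, Measurable[enlF T n ℱ t] (H t)) → (∀ i, 0 ≤ a i) →
    (∀ j, 0 ≤ b j) → (∀ k, 0 ≤ c k) → (∀ j, μ j ∈ EnlLiq T n ℱ) →
    (∀ᵐ x ∂Pbar, 0 ≤ PhiBar T d L M N n hn S f g h α β γ H a b μ c x) →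
    ∀ᵐ x ∂Pbar, PhiBar T d L M N n hn S f g h α β γ H a b μ c x = 0

/-- Strict no arbitrage (SNA) in `𝕄̄ⁿ`. -/
def SNAbar (T d L M N n : ℕ) (hn : N ≤ n) (ℱ : ℕ → MeasurableSpace Ω)
    (S : ℕ → Ω → Fin d → ℝ) (f : Fin L → Ω → ℝ) (g : Fin M → ℕ → Ω → ℝ)
    (h : Fin N → ℕ → Ω → ℝ) (Pbar : Measure (EnlOmega Ω T n))
    (α : Fin L → ℝ) (β : Fin M → ℝ) (γ : Fin N → ℝ) : Prop :=
  ∃ ε > (0 : ℝ), NAbar T d L M N n hn ℱ S f g h Pbar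
    (fun i => α i - ε) (fun j => β j - ε) (fun k => γ k + ε)

/-- `sup_{τ ∈ 𝒯̄ⁿ} E_Q[ḡ_τ]` for an American option `g` on the original space. -/
def supStop (T n : ℕ) (ℱ : ℕ → MeasurableSpace Ω) (g : ℕ → Ω → ℝ)
    (Q : Measure (EnlOmega Ω T n)) : ℝ :=
  sSup {r : ℝ | ∃ τ, IsEnlStoppingTime T n ℱ τ ∧ r = ∫ x, g ((τ x) : ℕ) x.1 ∂Q}

/-- The set `𝒬̄ⁿ` of martingale measures equivalent to `ℙ̄ⁿ` satisfying the strict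
price inequalities. -/
def QbarSet (T d L M N n : ℕ) (hn : N ≤ n) (ℱ : ℕ → MeasurableSpace Ω)
    (S : ℕ → Ω → Fin d → ℝ) (f : Fin L → Ω → ℝ) (g : Fin M → ℕ → Ω → ℝ)
    (h : Fin N → ℕ → Ω → ℝ) (Pbar : Measure (EnlOmega Ω T n))
    (α : Fin L → ℝ) (β : Fin M → ℝ) (γ : Fin N → ℝ) :
    Set (Measure (EnlOmega Ω T n)) :=
  {Q | IsProbabilityMeasure Q ∧ Q ≪ Pbar ∧ Pbar ≪ Q ∧
    IsMartingaleMeasure T d (enlF T n ℱ) (extProc T n S) Q ∧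
    (∀ i, ∫ x, extFun T n (f i) x ∂Q < α i) ∧
    (∀ k, γ k < ∫ x, extShort T N n hn h k x ∂Q) ∧
    ∀ j, supStop T n ℱ (g j) Q < β j}

section Aux

lemma countable_msble {γ : Type*} [MeasurableSpace γ] [Countable γ]
    [MeasurableSingletonClass γ] (s : Set γ) : MeasurableSet s :=
  s.to_countable.measurableSet

set_option linter.unusedSectionVars false

lemma enlF_le (T n : ℕ) (ℱ : ℕ → MeasurableSpace Ω)
    (hle : ∀ t, ℱ t ≤ ‹MeasurableSpace Ω›) (t : ℕ) :
    enlF T n ℱ t ≤ (inferInstance : MeasurableSpace (EnlOmega Ω T n)) := by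
  refine MeasurableSpace.generateFrom_le ?_
  rintro A (⟨B, hB, rfl⟩ | ⟨k, s, -, rfl⟩)
  · exact measurable_fst (hle t B hB)
  · have : {x : EnlOmega Ω T n | ((x.2 k : ℕ)) ≤ s}
        = Prod.snd ⁻¹' {v : Fin n → Fin (T + 1) | (v k : ℕ) ≤ s} := rfl
    rw [this]
    exact measurable_snd (countable_msble _)

lemma enlF_mono (T n : ℕ) (ℱ : ℕ → MeasurableSpace Ω) (hmono : Monotone ℱ)
    {s t : ℕ} (hst : s ≤ t) : enlF T n ℱ s ≤ enlF T n ℱ t := by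
  refine MeasurableSpace.generateFrom_le ?_
  rintro A (⟨B, hB, rfl⟩ | ⟨k, u, hu, rfl⟩)
  · exact MeasurableSpace.measurableSet_generateFrom (Or.inl ⟨B, hmono hst B hB, rfl⟩)
  · exact MeasurableSpace.measurableSet_generateFrom (Or.inr ⟨k, u, hu.trans hst, rfl⟩)

lemma measurable_of_levels {X : Type*} {m : MeasurableSpace X} {T : ℕ}
    (τ : X → Fin (T + 1)) (hτ : ∀ t : ℕ, MeasurableSet[m] {x | (τ x : ℕ) ≤ t}) :
    Measurable[m] τ := by
  apply measurable_to_countable'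
  intro u
  rcases Nat.eq_zero_or_pos (u : ℕ) with h0 | hpos
  · have : τ ⁻¹' {u} = {x | (τ x : ℕ) ≤ 0} := by
      ext x
      simp only [Set.mem_preimage, Set.mem_singleton_iff, Set.mem_setOf_eq, Fin.ext_iff]
      omega
    rw [this]; exact hτ 0
  · have : τ ⁻¹' {u} = {x | (τ x : ℕ) ≤ (u : ℕ)} \ {x | (τ x : ℕ) ≤ (u : ℕ) - 1} := by
      ext x
      simp only [Set.mem_preimage, Set.mem_singleton_iff, Set.mem_diff, Set.mem_setOf_eq,
        Fin.ext_iff]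
      omega
    rw [this]; exact (hτ _).diff (hτ _)

lemma measurable_stopped {X : Type*} {m : MeasurableSpace X} {T : ℕ}
    (F : Fin (T + 1) → X → ℝ) (hF : ∀ u, Measurable[m] (F u))
    (τ : X → Fin (T + 1)) (hτ : Measurable[m] τ) :
    Measurable[m] fun x => F (τ x) x := by
  have heq : (fun x => F (τ x) x)
      = fun x => ∑ u : Fin (T + 1), if τ x = u then F u x else 0 := by
    funext x
    rw [Finset.sum_ite_eq Finset.univ (τ x) fun u => F u x]
    simp
  rw [heq]
  exact Finset.measurable_sum _ fun u _ =>
    Measurable.ite (hτ (measurableSet_singleton u)) (hF u) measurable_const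

lemma integrable_of_bdd {X : Type*} [MeasurableSpace X] {μ : Measure X} [IsFiniteMeasure μ]
    {F : X → ℝ} (hm : Measurable F) {C : ℝ} (hb : ∀ x, |F x| ≤ C) : Integrable F μ :=
  ⟨hm.aestronglyMeasurable,
    HasFiniteIntegral.of_bounded (C := C) (ae_of_all _ fun x => by
      simpa [Real.norm_eq_abs] using hb x)⟩

lemma abs_integral_le_of_bdd {X : Type*} [MeasurableSpace X] {μ : Measure X}
    [IsProbabilityMeasure μ] {F : X → ℝ} {C : ℝ} (hb : ∀ x, |F x| ≤ C) :
    |∫ x, F x ∂μ| ≤ C := by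
  have := norm_integral_le_of_norm_le_const (μ := μ) (f := F) (C := C)
    (ae_of_all _ fun x => by simpa [Real.norm_eq_abs] using hb x)
  simpa [Real.norm_eq_abs, measure_univ] using this

lemma const_stopping (T n : ℕ) (ℱ : ℕ → MeasurableSpace Ω) (u : Fin (T + 1)) :
    IsEnlStoppingTime T n ℱ (fun _ => u) := by
  intro t
  by_cases hu : (u : ℕ) ≤ t
  · have : {x : EnlOmega Ω T n | ((u : ℕ)) ≤ t} = Set.univ := by ext x; simp [hu]
    rw [this]; exact @MeasurableSet.univ _ (enlF T n ℱ t)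
  · have : {x : EnlOmega Ω T n | ((u : ℕ)) ≤ t} = ∅ := by ext x; simp [hu]
    rw [this]; exact @MeasurableSet.empty _ (enlF T n ℱ t)

lemma stopping_measurable (T n : ℕ) (ℱ : ℕ → MeasurableSpace Ω)
    (hle : ∀ t, ℱ t ≤ ‹MeasurableSpace Ω›)
    {τ : EnlOmega Ω T n → Fin (T + 1)} (hτ : IsEnlStoppingTime T n ℱ τ) :
    Measurable τ := by
  refine measurable_of_levels (m := inferInstance) τ fun t => ?_
  exact enlF_le T n ℱ hle t _ (hτ t)

lemma stopped_val_measurable (T n : ℕ) (ℱ : ℕ → MeasurableSpace Ω)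
    (hle : ∀ t, ℱ t ≤ ‹MeasurableSpace Ω›)
    (g : ℕ → Ω → ℝ) (hg : ∀ t, Measurable[ℱ t] (g t))
    {τ : EnlOmega Ω T n → Fin (T + 1)} (hτ : IsEnlStoppingTime T n ℱ τ) :
    Measurable fun x : EnlOmega Ω T n => g ((τ x : ℕ)) x.1 := by
  have hF : ∀ u : Fin (T + 1), Measurable fun x : EnlOmega Ω T n => g ((u : ℕ)) x.1 :=
    fun u => ((hg (u : ℕ)).mono (hle _) le_rfl).comp measurable_fst
  exact measurable_stopped (m := inferInstance) _ hF τ (stopping_measurable T n ℱ hle hτ)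

lemma supStop_spec (T n : ℕ) (ℱ : ℕ → MeasurableSpace Ω)
    (hle : ∀ t, ℱ t ≤ ‹MeasurableSpace Ω›)
    (g : ℕ → Ω → ℝ) (hg : ∀ t, Measurable[ℱ t] (g t))
    {C : ℝ} (hb : ∀ t ω, |g t ω| ≤ C)
    (Q : Measure (EnlOmega Ω T n)) [IsProbabilityMeasure Q] :
    (-C ≤ supStop T n ℱ g Q ∧ supStop T n ℱ g Q ≤ C) ∧
      ∀ τ, IsEnlStoppingTime T n ℱ τ →
        ∫ x, g ((τ x : ℕ)) x.1 ∂Q ≤ supStop T n ℱ g Q := by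
  set s := {r : ℝ | ∃ τ, IsEnlStoppingTime T n ℱ τ ∧ r = ∫ x, g ((τ x) : ℕ) x.1 ∂Q} with hs
  have hsub : ∀ r ∈ s, |r| ≤ C := by
    rintro r ⟨τ, hτ, rfl⟩
    exact abs_integral_le_of_bdd fun x => hb _ _
  have hne : s.Nonempty := ⟨_, ⟨fun _ => 0, const_stopping T n ℱ 0, rfl⟩⟩
  have hbdd : BddAbove s := ⟨C, fun r hr => (abs_le.1 (hsub r hr)).2⟩
  have hmem : ∀ τ, IsEnlStoppingTime T n ℱ τ →
      ∫ x, g ((τ x : ℕ)) x.1 ∂Q ≤ supStop T n ℱ g Q := fun τ hτ =>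
    le_csSup hbdd ⟨τ, hτ, rfl⟩
  refine ⟨⟨?_, ?_⟩, hmem⟩
  · obtain ⟨r, hr⟩ := hne
    exact le_trans (abs_le.1 (hsub r hr)).1 (le_csSup hbdd hr)
  · exact csSup_le hne fun r hr => (abs_le.1 (hsub r hr)).2

/-- The map `(ω, t¹,…,tᴺ) ↦ (ω, t¹,…,tᴺ, σ(ω,t¹,…,tᴺ))`. -/
def snocMap (T N : ℕ) (σ : EnlOmega Ω T N → Fin (T + 1)) (x : EnlOmega Ω T N) :
    EnlOmega Ω T (N + 1) := (x.1, Fin.snoc x.2 (σ x))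

lemma snocMap_measurable (T N : ℕ) {σ : EnlOmega Ω T N → Fin (T + 1)} (hσ : Measurable σ) :
    Measurable (snocMap T N σ) := by
  refine measurable_fst.prodMk (measurable_pi_iff.2 fun k => ?_)
  induction k using Fin.lastCases with
  | last => simpa [snocMap, Fin.snoc_last] using hσ
  | cast j =>
      simpa [snocMap, Fin.snoc_castSucc, Function.comp_def] using (measurable_pi_apply j).comp measurable_snd

lemma snocMap_meas_enlF (T N : ℕ) (ℱ : ℕ → MeasurableSpace Ω) (t : ℕ)
    (σ : EnlOmega Ω T N → Fin (T + 1))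
    (hσ : ∀ s, s ≤ t → MeasurableSet[enlF T N ℱ t] {x | (σ x : ℕ) ≤ s}) :
    @Measurable _ _ (enlF T N ℱ t) (enlF T (N + 1) ℱ t) (snocMap T N σ) := by
  refine @measurable_generateFrom _ _ (enlF T N ℱ t) _ _ ?_
  rintro A (⟨B, hB, rfl⟩ | ⟨k, s, hs, rfl⟩)
  · exact MeasurableSpace.measurableSet_generateFrom (Or.inl ⟨B, hB, rfl⟩)
  · induction k using Fin.lastCases with
    | last =>
        have : snocMap T N σ ⁻¹' {y : EnlOmega Ω T (N + 1) | ((y.2 (Fin.last N) : ℕ)) ≤ s}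
            = {x | (σ x : ℕ) ≤ s} := by
          ext x; simp [snocMap, Fin.snoc_last]
        rw [this]; exact hσ s hs
    | cast j =>
        have : snocMap T N σ ⁻¹' {y : EnlOmega Ω T (N + 1) | ((y.2 (Fin.castSucc j) : ℕ)) ≤ s}
            = {x | (x.2 j : ℕ) ≤ s} := by
          ext x; simp [snocMap, Fin.snoc_castSucc]
        rw [this]
        exact MeasurableSpace.measurableSet_generateFrom (Or.inr ⟨j, s, hs, rfl⟩)

lemma restrict_finset_sum {X ι : Type*} [MeasurableSpace X] (s : Finset ι) (μ : ι → Measure X)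
    (A : Set X) : (∑ i ∈ s, μ i).restrict A = ∑ i ∈ s, (μ i).restrict A := by
  induction s using Finset.cons_induction with
  | empty => simp
  | cons i s hi ih => simp [Finset.sum_cons, ih]

lemma isProb_mix {X Y : Type*} [MeasurableSpace X] [MeasurableSpace Y]
    (Q : Measure X) [IsProbabilityMeasure Q] {r : ℝ} (hr0 : 0 ≤ r) (hr1 : r ≤ 1) (T : ℕ)
    (m0 : X → Y) (mu : Fin (T + 1) → X → Y)
    (hm0 : Measurable m0) (hmu : ∀ u, Measurable (mu u)) :
    IsProbabilityMeasure (ENNReal.ofReal (1 - r) • Q.map m0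
      + ENNReal.ofReal r • ((((T : ENNReal) + 1))⁻¹ • ∑ u : Fin (T + 1), Q.map (mu u))) := by
  have h1 : ∀ (m : X → Y), Measurable m → Q.map m Set.univ = 1 := fun m hm => by
    rw [Measure.map_apply hm MeasurableSet.univ]; simp
  constructor
  have h2 : ((T : ENNReal) + 1) ≠ 0 := by simp [add_eq_zero]
  have h3 : ((T : ENNReal) + 1) ≠ ⊤ := by
    simp [ENNReal.add_ne_top, ENNReal.natCast_ne_top]
  simp only [Measure.add_apply, Measure.smul_apply, smul_eq_mul,
    Measure.finset_sum_apply, h1 _ hm0]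
  rw [Finset.sum_congr rfl fun u _ => h1 _ (hmu u)]
  simp only [Finset.sum_const, Finset.card_univ, Fintype.card_fin, nsmul_eq_mul, mul_one]
  rw [show ((T + 1 : ℕ) : ENNReal) = (T : ENNReal) + 1 by push_cast; ring,
    ENNReal.inv_mul_cancel h2 h3, mul_one,
    ← ENNReal.ofReal_add (by linarith) hr0]
  simp

lemma setIntegral_mix {X Y : Type*} [MeasurableSpace X] [MeasurableSpace Y]
    {E : Type*} [NormedAddCommGroup E] [NormedSpace ℝ E]
    (Q : Measure X) [IsProbabilityMeasure Q] {r : ℝ} (hr0 : 0 ≤ r) (hr1 : r ≤ 1) (T : ℕ)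
    (m0 : X → Y) (mu : Fin (T + 1) → X → Y)
    (hm0 : Measurable m0) (hmu : ∀ u, Measurable (mu u))
    (F : Y → E) (hF : StronglyMeasurable F)
    (hint0 : Integrable (fun x => F (m0 x)) Q)
    (hintu : ∀ u, Integrable (fun x => F (mu u x)) Q)
    (A : Set Y) (hA : MeasurableSet A) :
    ∫ y in A, F y ∂(ENNReal.ofReal (1 - r) • Q.map m0
        + ENNReal.ofReal r • ((((T : ENNReal) + 1))⁻¹ • ∑ u : Fin (T + 1), Q.map (mu u)))
      = (1 - r) • ∫ x in m0 ⁻¹' A, F (m0 x) ∂Q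
        + (r * ((T : ℝ) + 1)⁻¹) • ∑ u : Fin (T + 1), ∫ x in mu u ⁻¹' A, F (mu u x) ∂Q := by
  have hmapint : ∀ (m : X → Y), Measurable m → Integrable (fun x => F (m x)) Q →
      Integrable F (Q.map m) := fun m hm hi =>
    (integrable_map_measure hF.aestronglyMeasurable hm.aemeasurable).2 hi
  have hsetmap : ∀ (m : X → Y), Measurable m →
      ∫ y in A, F y ∂(Q.map m) = ∫ x in m ⁻¹' A, F (m x) ∂Q := by
    intro m hm
    rw [Measure.restrict_map hm hA, integral_map hm.aemeasurable hF.aestronglyMeasurable]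
  have hres : (ENNReal.ofReal (1 - r) • Q.map m0
        + ENNReal.ofReal r • ((((T : ENNReal) + 1))⁻¹ • ∑ u : Fin (T + 1), Q.map (mu u))).restrict A
      = ENNReal.ofReal (1 - r) • (Q.map m0).restrict A
        + ENNReal.ofReal r • ((((T : ENNReal) + 1))⁻¹
            • ∑ u : Fin (T + 1), (Q.map (mu u)).restrict A) := by
    simp [Measure.restrict_add, Measure.restrict_smul, restrict_finset_sum]
  have hintsum : Integrable F (∑ u : Fin (T + 1), (Q.map (mu u)).restrict A) :=
    integrable_finset_sum_measure.2 fun u _ => (hmapint _ (hmu u) (hintu u)).restrict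
  have htop : (((T : ENNReal) + 1))⁻¹ ≠ ⊤ := by
    simp [ENNReal.inv_ne_top, add_eq_zero]
  have h1 : Integrable F (ENNReal.ofReal (1 - r) • (Q.map m0).restrict A) :=
    ((hmapint _ hm0 hint0).restrict).smul_measure ENNReal.ofReal_ne_top
  have h2 : Integrable F (ENNReal.ofReal r • ((((T : ENNReal) + 1))⁻¹
      • ∑ u : Fin (T + 1), (Q.map (mu u)).restrict A)) :=
    (hintsum.smul_measure htop).smul_measure ENNReal.ofReal_ne_top
  rw [hres, integral_add_measure h1 h2, integral_smul_measure, integral_smul_measure,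
    integral_smul_measure,
    integral_finset_sum_measure fun u _ => (hmapint _ (hmu u) (hintu u)).restrict,
    ENNReal.toReal_ofReal (by linarith : (0:ℝ) ≤ 1 - r), ENNReal.toReal_ofReal hr0]
  have hct : ((((T : ENNReal) + 1))⁻¹).toReal = ((T : ℝ) + 1)⁻¹ := by
    rw [ENNReal.toReal_inv,
      show ((T : ENNReal) + 1) = ((T + 1 : ℕ) : ENNReal) by push_cast; ring,
      ENNReal.toReal_natCast]
    push_cast
    ring
  rw [hct, hsetmap _ hm0, Finset.sum_congr rfl fun u _ => hsetmap _ (hmu u), smul_smul]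

lemma integral_mix {X Y : Type*} [MeasurableSpace X] [MeasurableSpace Y]
    (Q : Measure X) [IsProbabilityMeasure Q] {r : ℝ} (hr0 : 0 ≤ r) (hr1 : r ≤ 1) (T : ℕ)
    (m0 : X → Y) (mu : Fin (T + 1) → X → Y)
    (hm0 : Measurable m0) (hmu : ∀ u, Measurable (mu u))
    (F : Y → ℝ) (hF : Measurable F) {C : ℝ} (hb : ∀ y, |F y| ≤ C) :
    ∫ y, F y ∂(ENNReal.ofReal (1 - r) • Q.map m0
        + ENNReal.ofReal r • ((((T : ENNReal) + 1))⁻¹ • ∑ u : Fin (T + 1), Q.map (mu u)))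
      = (1 - r) * ∫ x, F (m0 x) ∂Q
        + (r * ((T : ℝ) + 1)⁻¹) * ∑ u : Fin (T + 1), ∫ x, F (mu u x) ∂Q := by
  have := setIntegral_mix Q hr0 hr1 T m0 mu hm0 hmu F hF.stronglyMeasurable
    (integrable_of_bdd (hF.comp hm0) fun x => hb _)
    (fun u => integrable_of_bdd (hF.comp (hmu u)) fun x => hb _)
    Set.univ MeasurableSet.univ
  simpa [Measure.restrict_univ, smul_eq_mul] using this

lemma key_step (T d L M N : ℕ)
    (ℱ : ℕ → MeasurableSpace Ω) (hmono : Monotone ℱ)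
    (hle : ∀ t, ℱ t ≤ ‹MeasurableSpace Ω›)
    (ℙ : Measure Ω) [IsProbabilityMeasure ℙ]
    (S : ℕ → Ω → Fin d → ℝ) (hS : ∀ t, Measurable[ℱ t] (S t))
    (f : Fin L → Ω → ℝ) (hf : ∀ i, Measurable[ℱ T] (f i))
    {Cf : ℝ} (hCf : ∀ i ω, |f i ω| ≤ Cf)
    (g : Fin M → ℕ → Ω → ℝ) (hg : ∀ j t, Measurable[ℱ t] (g j t))
    {Cg : ℝ} (hCg : ∀ j t ω, |g j t ω| ≤ Cg)
    (h : Fin N → ℕ → Ω → ℝ) (hh : ∀ k t, Measurable[ℱ t] (h k t))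
    {Ch : ℝ} (hCh : ∀ k t ω, |h k t ω| ≤ Ch)
    (φ : ℕ → Ω → ℝ) (hφ : ∀ t, Measurable[ℱ t] (φ t))
    {Cφ : ℝ} (hCφ : ∀ t ω, |φ t ω| ≤ Cφ)
    (α : Fin L → ℝ) (β : Fin M → ℝ) (γ : Fin N → ℝ)
    (PN : Measure (Fin N → Fin (T + 1))) [IsProbabilityMeasure PN]
    (hfullN : ∀ v : Fin N → Fin (T + 1), 0 < PN {v})
    (PN1 : Measure (Fin (N + 1) → Fin (T + 1))) [IsProbabilityMeasure PN1]
    (hfullN1 : ∀ v : Fin (N + 1) → Fin (T + 1), 0 < PN1 {v})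
    (Q : Measure (EnlOmega Ω T N))
    (hQ : Q ∈ QbarSet T d L M N N le_rfl ℱ S f g h (ℙ.prod PN) α β γ)
    (τ : EnlOmega Ω T N → Fin (T + 1)) (hτ : IsEnlStoppingTime T N ℱ τ)
    (r : ℝ) (hr0 : 0 < r) (hr1 : r < 1) :
    ∃ ν ∈ QbarSet T d L M N (N + 1) (Nat.le_succ N) ℱ S f g h (ℙ.prod PN1) α β γ,
      ∫ y, extLast T N φ y ∂ν
        = (1 - r) * ∫ x, φ ((τ x : ℕ)) x.1 ∂Q
          + (r * ((T : ℝ) + 1)⁻¹) * ∑ u : Fin (T + 1), ∫ x, φ ((u : ℕ)) x.1 ∂Q := by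
  obtain ⟨hQprob, hQac1, hQac2, hQmart, hQf, hQh, hQg⟩ := hQ
  haveI := hQprob
  have hTne : ((T : ℝ) + 1) ≠ 0 := by positivity
  -- measurability of the maps
  have hτm : Measurable τ := stopping_measurable T N ℱ hle hτ
  have hmτ : Measurable (snocMap T N τ) := snocMap_measurable T N hτm
  have hmu : ∀ u : Fin (T + 1), Measurable (snocMap (Ω := Ω) T N (fun _ => u)) := fun u =>
    snocMap_measurable T N (σ := fun _ => u) measurable_const
  -- the mixture measure
  set ν : Measure (EnlOmega Ω T (N + 1)) :=
    ENNReal.ofReal (1 - r) • Q.map (snocMap T N τ)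
      + ENNReal.ofReal r • ((((T : ENNReal) + 1))⁻¹
          • ∑ u : Fin (T + 1), Q.map (snocMap T N (fun _ => u))) with hν
  haveI hνprob : IsProbabilityMeasure ν :=
    isProb_mix Q hr0.le hr1.le T _ _ hmτ hmu
  -- filtration-level measurability of the snoc maps
  have hstopF : ∀ (σ : EnlOmega Ω T N → Fin (T + 1)), IsEnlStoppingTime T N ℱ σ →
      ∀ t, @Measurable _ _ (enlF T N ℱ t) (enlF T (N + 1) ℱ t) (snocMap T N σ) :=
    fun σ hσ t => snocMap_meas_enlF T N ℱ t σ fun s hs =>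
      enlF_mono T N ℱ hmono hs _ (hσ s)
  have hmτF := hstopF τ hτ
  have hmuF : ∀ u, ∀ t, @Measurable _ _ (enlF T N ℱ t) (enlF T (N + 1) ℱ t)
      (snocMap T N (fun _ => u)) := fun u => hstopF _ (const_stopping T N ℱ u)
  -- integral formula
  have intν : ∀ (F : EnlOmega Ω T (N + 1) → ℝ), Measurable F → ∀ C : ℝ, (∀ y, |F y| ≤ C) →
      ∫ y, F y ∂ν = (1 - r) * ∫ x, F (snocMap T N τ x) ∂Q
        + (r * ((T : ℝ) + 1)⁻¹)
            * ∑ u : Fin (T + 1), ∫ x, F (snocMap T N (fun _ => u) x) ∂Q :=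
    fun F hF C hb => integral_mix Q hr0.le hr1.le T (snocMap T N τ)
      (fun u => snocMap T N (fun _ => u)) hmτ hmu F hF hb
  -- composition identities
  have hsnock : ∀ (w : Fin N → Fin (T + 1)) (u : Fin (T + 1)) (k : Fin N),
      Fin.snoc (α := fun _ => Fin (T + 1)) w u (Fin.castLE (Nat.le_succ N) k)
        = w (Fin.castLE le_rfl k) := by
    intro w u k
    have h1 : Fin.castLE (Nat.le_succ N) k = Fin.castSucc (Fin.castLE le_rfl k) := by
      apply Fin.ext; simp
    rw [h1]
    simp
  have hshort : ∀ (σ : EnlOmega Ω T N → Fin (T + 1)) (k : Fin N) (x : EnlOmega Ω T N),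
      extShort T N (N + 1) (Nat.le_succ N) h k (snocMap T N σ x)
        = extShort T N N le_rfl h k x := by
    intro σ k x
    simp only [extShort, snocMap, hsnock]
  have hlast : ∀ (σ : EnlOmega Ω T N → Fin (T + 1)) (x : EnlOmega Ω T N),
      extLast T N φ (snocMap T N σ x) = φ ((σ x : ℕ)) x.1 := by
    intro σ x
    simp only [extLast, snocMap, Fin.snoc_last]
  -- slices
  have hslicemeas : ∀ (A : Set (EnlOmega Ω T (N + 1))), MeasurableSet A →
      ∀ v, MeasurableSet {ω | (ω, v) ∈ A} := fun A hA v =>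
    (measurable_prodMk_right (y := v)) hA
  -- absolute continuity
  have hAC1 : ν ≪ ℙ.prod PN1 := by
    refine Measure.AbsolutelyContinuous.mk fun A hA hA0 => ?_
    have hslice : ∀ v : Fin (N + 1) → Fin (T + 1), ℙ {ω | (ω, v) ∈ A} = 0 := by
      intro v
      have hsub : {ω | (ω, v) ∈ A} ×ˢ ({v} : Set (Fin (N + 1) → Fin (T + 1))) ⊆ A := by
        rintro ⟨ω, v'⟩ ⟨hω, hv⟩
        simp only [Set.mem_singleton_iff] at hv
        subst hv
        exact hω
      have hle0 : ℙ {ω | (ω, v) ∈ A} * PN1 {v} ≤ 0 := by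
        rw [← Measure.prod_prod, ← hA0]
        exact measure_mono hsub
      rcases mul_eq_zero.1 (le_antisymm hle0 (by simp)) with h' | h'
      · exact h'
      · exact absurd h' (hfullN1 v).ne'
    have hQ0 : ∀ (σ : EnlOmega Ω T N → Fin (T + 1)), Q (snocMap T N σ ⁻¹' A) = 0 := by
      intro σ
      have hsub : snocMap T N σ ⁻¹' A
          ⊆ ⋃ v : Fin (N + 1) → Fin (T + 1), {ω | (ω, v) ∈ A} ×ˢ Set.univ := by
        intro x hx
        exact Set.mem_iUnion.2 ⟨Fin.snoc x.2 (σ x), hx, Set.mem_univ _⟩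
      refine measure_mono_null hsub (measure_iUnion_null fun v => hQac1 ?_)
      rw [Measure.prod_prod, hslice v, zero_mul]
    simp [hν, Measure.add_apply, Measure.smul_apply, Measure.finset_sum_apply,
      Measure.map_apply hmτ hA, Measure.map_apply (hmu _) hA, hQ0]
  have hAC2 : ℙ.prod PN1 ≪ ν := by
    refine Measure.AbsolutelyContinuous.mk fun A hA hν0 => ?_
    have hterm : ∀ u : Fin (T + 1), Q (snocMap T N (fun _ => u) ⁻¹' A) = 0 := by
      intro u
      have := hν0
      rw [hν] at this
      simp only [Measure.add_apply, Measure.smul_apply, smul_eq_mul,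
        Measure.finset_sum_apply, Measure.map_apply hmτ hA,
        Measure.map_apply (hmu _) hA] at this
      rcases add_eq_zero.1 this with ⟨-, h2⟩
      rcases mul_eq_zero.1 h2 with h' | h'
      · exact absurd h' (by simp [ENNReal.ofReal_eq_zero]; linarith)
      rcases mul_eq_zero.1 h' with h'' | h''
      · exact absurd h'' (by simp [add_eq_zero])
      · exact (Finset.sum_eq_zero_iff.1 h'') u (Finset.mem_univ u)
    have hslice : ∀ v : Fin (N + 1) → Fin (T + 1), ℙ {ω | (ω, v) ∈ A} = 0 := by
      intro v
      have hsub : {ω | (ω, v) ∈ A} ×ˢ ({Fin.init v} : Set (Fin N → Fin (T + 1)))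
          ⊆ snocMap T N (fun _ => v (Fin.last N)) ⁻¹' A := by
        rintro ⟨ω, w⟩ ⟨hω, hw⟩
        simp only [Set.mem_singleton_iff] at hw
        subst hw
        show (ω, Fin.snoc (Fin.init v) (v (Fin.last N))) ∈ A
        rw [Fin.snoc_init_self]
        exact hω
      have h0 : (ℙ.prod PN) ({ω | (ω, v) ∈ A} ×ˢ ({Fin.init v} : Set (Fin N → Fin (T + 1)))) = 0 :=
        hQac2 (measure_mono_null hsub (hterm _))
      rw [Measure.prod_prod] at h0
      rcases mul_eq_zero.1 h0 with h' | h'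
      · exact h'
      · exact absurd h' (hfullN (Fin.init v)).ne'
    have hsub : A ⊆ ⋃ v : Fin (N + 1) → Fin (T + 1), {ω | (ω, v) ∈ A} ×ˢ ({v} : Set _) := by
      rintro ⟨ω, v⟩ hx
      exact Set.mem_iUnion.2 ⟨v, hx, rfl⟩
    refine measure_mono_null hsub (measure_iUnion_null fun v => ?_)
    rw [Measure.prod_prod, hslice v, zero_mul]
  refine ⟨ν, ⟨hνprob, hAC1, hAC2, ⟨?_, ?_⟩, ?_, ?_, ?_⟩, ?_⟩
  · -- integrability of the stock process
    intro t ht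
    have hSm : Measurable (extProc T (N + 1) S t) :=
      ((hS t).mono (hle t) le_rfl).comp measurable_fst
    have hIQ : Integrable (extProc T N S t) Q := hQmart.1 t ht
    have hmap : ∀ (σ : EnlOmega Ω T N → Fin (T + 1)), Measurable (snocMap T N σ) →
        Integrable (extProc T (N + 1) S t) (Q.map (snocMap T N σ)) := by
      intro σ hσ
      refine (integrable_map_measure hSm.stronglyMeasurable.aestronglyMeasurable
        hσ.aemeasurable).2 ?_
      exact hIQ
    have htop : (((T : ENNReal) + 1))⁻¹ ≠ ⊤ := by
      simp [ENNReal.inv_ne_top, add_eq_zero]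
    exact ((hmap τ hmτ).smul_measure ENNReal.ofReal_ne_top).add_measure
      (((integrable_finset_sum_measure.2 fun u _ => hmap _ (hmu u)).smul_measure
        htop).smul_measure ENNReal.ofReal_ne_top)
  · -- martingale property
    intro t ht A hA
    have hAmb : MeasurableSet A := enlF_le T (N + 1) ℱ hle t A hA
    have hSm : ∀ t', Measurable (extProc T (N + 1) S t') := fun t' =>
      ((hS t').mono (hle t') le_rfl).comp measurable_fst
    have e : ∀ t', t' ≤ T → ∫ y in A, extProc T (N + 1) S t' y ∂ν
        = (1 - r) • ∫ x in snocMap T N τ ⁻¹' A, extProc T N S t' x ∂Q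
          + (r * ((T : ℝ) + 1)⁻¹) • ∑ u : Fin (T + 1),
              ∫ x in snocMap T N (fun _ => u) ⁻¹' A, extProc T N S t' x ∂Q := by
      intro t' ht'
      have := setIntegral_mix Q hr0.le hr1.le T _ _ hmτ hmu
        (extProc T (N + 1) S t') (hSm t').stronglyMeasurable
        (hQmart.1 t' ht') (fun u => hQmart.1 t' ht') A hAmb
      exact this
    rw [hν]
    rw [e (t + 1) ht, e t (le_of_lt (Nat.lt_of_lt_of_le ht le_rfl))]
    congr 1
    · exact congrArg _ (hQmart.2 t ht _ (hmτF t hA))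
    · exact congrArg _ (Finset.sum_congr rfl fun u _ => hQmart.2 t ht _ (hmuF u t hA))
  · -- European payoffs
    intro i
    have hfm : Measurable (extFun T (N + 1) (f i)) :=
      ((hf i).mono (hle T) le_rfl).comp measurable_fst
    rw [intν _ hfm Cf fun y => hCf i y.1]
    have hv : ∀ (σ : EnlOmega Ω T N → Fin (T + 1)),
        ∫ x, extFun T (N + 1) (f i) (snocMap T N σ x) ∂Q
          = ∫ x, extFun T N (f i) x ∂Q := fun σ => rfl
    rw [hv, Finset.sum_congr rfl fun u _ => hv _, Finset.sum_const, Finset.card_univ,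
      Fintype.card_fin, nsmul_eq_mul]
    have : (1 - r) * ∫ x, extFun T N (f i) x ∂Q
        + (r * ((T : ℝ) + 1)⁻¹) * (((T + 1 : ℕ) : ℝ) * ∫ x, extFun T N (f i) x ∂Q)
        = ∫ x, extFun T N (f i) x ∂Q := by
      push_cast
      field_simp
      ring
    rw [this]
    exact hQf i
  · -- shorted American payoffs
    intro k
    have hhm : Measurable (extShort T N (N + 1) (Nat.le_succ N) h k) := by
      have : ∀ u : Fin (T + 1), Measurable fun x : EnlOmega Ω T (N + 1) =>
          h k ((u : ℕ)) x.1 := fun u => ((hh k _).mono (hle _) le_rfl).comp measurable_fst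
      have hcoord : Measurable fun x : EnlOmega Ω T (N + 1) =>
          x.2 (Fin.castLE (Nat.le_succ N) k) := (measurable_pi_apply _).comp measurable_snd
      exact measurable_stopped (m := inferInstance) (fun u (x : EnlOmega Ω T (N + 1)) => h k ((u : ℕ)) x.1) this
        (fun x : EnlOmega Ω T (N + 1) => x.2 (Fin.castLE (Nat.le_succ N) k)) hcoord
    rw [intν _ hhm Ch fun y => hCh k _ y.1]
    simp only [hshort]
    rw [Finset.sum_const, Finset.card_univ, Fintype.card_fin, nsmul_eq_mul]
    have : (1 - r) * ∫ x, extShort T N N le_rfl h k x ∂Q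
        + (r * ((T : ℝ) + 1)⁻¹) * (((T + 1 : ℕ) : ℝ) * ∫ x, extShort T N N le_rfl h k x ∂Q)
        = ∫ x, extShort T N N le_rfl h k x ∂Q := by
      push_cast
      field_simp
      ring
    rw [this]
    exact hQh k
  · -- American payoffs
    intro j
    refine lt_of_le_of_lt ?_ (hQg j)
    have hVspec := supStop_spec T N ℱ hle (g j) (hg j) (hCg j) Q
    set V := supStop T N ℱ (g j) Q with hV
    refine csSup_le ⟨_, ⟨fun _ => 0, const_stopping T (N + 1) ℱ 0, rfl⟩⟩ ?_
    rintro ρ ⟨τ', hτ', rfl⟩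
    have hG : Measurable fun y : EnlOmega Ω T (N + 1) => g j ((τ' y : ℕ)) y.1 :=
      stopped_val_measurable T (N + 1) ℱ hle (g j) (hg j) hτ'
    rw [intν _ hG Cg fun y => hCg j _ y.1]
    have hcomp : ∀ (σ : EnlOmega Ω T N → Fin (T + 1)), IsEnlStoppingTime T N ℱ σ →
        ∫ x, g j ((τ' (snocMap T N σ x) : ℕ)) (snocMap T N σ x).1 ∂Q ≤ V := by
      intro σ hσ
      have hστ' : IsEnlStoppingTime T N ℱ fun x => τ' (snocMap T N σ x) := fun t =>
        hstopF σ hσ t (hτ' t)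
      exact hVspec.2 _ hστ'
    have h1 : ∫ x, g j ((τ' (snocMap T N τ x) : ℕ)) (snocMap T N τ x).1 ∂Q ≤ V :=
      hcomp τ hτ
    have h2 : ∀ u : Fin (T + 1),
        ∫ x, g j ((τ' (snocMap T N (fun _ => u) x) : ℕ)) (snocMap T N (fun _ => u) x).1 ∂Q
          ≤ V := fun u => hcomp _ (const_stopping T N ℱ u)
    have hsum : ∑ u : Fin (T + 1),
        ∫ x, g j ((τ' (snocMap T N (fun _ => u) x) : ℕ)) (snocMap T N (fun _ => u) x).1 ∂Q
        ≤ ((T + 1 : ℕ) : ℝ) * V := by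
      calc _ ≤ ∑ _u : Fin (T + 1), V := Finset.sum_le_sum fun u _ => h2 u
      _ = ((T + 1 : ℕ) : ℝ) * V := by
          rw [Finset.sum_const, Finset.card_univ, Fintype.card_fin, nsmul_eq_mul]
    have hc1 : (1 - r) * ∫ x, g j ((τ' (snocMap T N τ x) : ℕ)) (snocMap T N τ x).1 ∂Q
        ≤ (1 - r) * V := mul_le_mul_of_nonneg_left h1 (by linarith)
    have hc2 : (r * ((T : ℝ) + 1)⁻¹) * ∑ u : Fin (T + 1),
          ∫ x, g j ((τ' (snocMap T N (fun _ => u) x) : ℕ)) (snocMap T N (fun _ => u) x).1 ∂Q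
        ≤ (r * ((T : ℝ) + 1)⁻¹) * (((T + 1 : ℕ) : ℝ) * V) :=
      mul_le_mul_of_nonneg_left hsum (by positivity)
    have heq : (1 - r) * V + (r * ((T : ℝ) + 1)⁻¹) * (((T + 1 : ℕ) : ℝ) * V) = V := by
      push_cast
      field_simp
      ring
    linarith
  · -- value of the liquidated option
    have hφm : Measurable (extLast T N φ) := by
      have : ∀ u : Fin (T + 1), Measurable fun x : EnlOmega Ω T (N + 1) =>
          φ ((u : ℕ)) x.1 := fun u => ((hφ _).mono (hle _) le_rfl).comp measurable_fst
      have hcoord : Measurable fun x : EnlOmega Ω T (N + 1) =>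
          x.2 (Fin.last N) := (measurable_pi_apply _).comp measurable_snd
      exact measurable_stopped (m := inferInstance) (fun u (x : EnlOmega Ω T (N + 1)) => φ ((u : ℕ)) x.1) this
        (fun x : EnlOmega Ω T (N + 1) => x.2 (Fin.last N)) hcoord
    rw [intν _ hφm Cφ fun y => hCφ _ y.1]
    simp only [hlast]

end Aux

/-- inequality chain \eqref{e2} of the paper.
`inf_{Q∈𝒬̄^N} sup_{τ∈𝒯̄^N} E_Q[φ̄^N_τ] ≤ sup_{Q∈𝒬̄^N} sup_{τ∈𝒯̄^N} E_Q[φ̄^N_τ]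
  ≤ sup_{Q∈𝒬̄^{N+1}} E_Q[φ̄^{N+1}]`. -/
theorem optimal_stopping_value_le_european_extension_value
    [MeasurableSpace.CountablyGenerated Ω]
    (T d L M N : ℕ)
    (ℱ : ℕ → MeasurableSpace Ω) (hmono : Monotone ℱ)
    (hle : ∀ t, ℱ t ≤ (inferInstance : MeasurableSpace Ω))
    (ℙ : Measure Ω) [IsProbabilityMeasure ℙ]
    (S : ℕ → Ω → Fin d → ℝ) (hS : ∀ t, Measurable[ℱ t] (S t))
    (f : Fin L → Ω → ℝ) (hf : ∀ i, Measurable[ℱ T] (f i))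
    (hfb : ∃ C, ∀ i ω, |f i ω| ≤ C)
    (g : Fin M → ℕ → Ω → ℝ) (hg : ∀ j t, Measurable[ℱ t] (g j t))
    (hgb : ∃ C, ∀ j t ω, |g j t ω| ≤ C)
    (h : Fin N → ℕ → Ω → ℝ) (hh : ∀ k t, Measurable[ℱ t] (h k t))
    (hhb : ∃ C, ∀ k t ω, |h k t ω| ≤ C)
    (φ : ℕ → Ω → ℝ) (hφ : ∀ t, Measurable[ℱ t] (φ t))
    (hφb : ∃ C, ∀ t ω, |φ t ω| ≤ C)
    (α : Fin L → ℝ) (β : Fin M → ℝ) (γ : Fin N → ℝ)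
    (PN : Measure (Fin N → Fin (T + 1))) [IsProbabilityMeasure PN]
    (hfullN : ∀ v : Fin N → Fin (T + 1), 0 < PN {v})
    (PN1 : Measure (Fin (N + 1) → Fin (T + 1))) [IsProbabilityMeasure PN1]
    (hfullN1 : ∀ v : Fin (N + 1) → Fin (T + 1), 0 < PN1 {v})
    (hne : (QbarSet T d L M N N le_rfl ℱ S f g h (ℙ.prod PN) α β γ).Nonempty) :
    sInf {r : ℝ | ∃ Q ∈ QbarSet T d L M N N le_rfl ℱ S f g h (ℙ.prod PN) α β γ,
        r = supStop T N ℱ φ Q} ≤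
      sSup {r : ℝ | ∃ Q ∈ QbarSet T d L M N N le_rfl ℱ S f g h (ℙ.prod PN) α β γ,
        r = supStop T N ℱ φ Q} ∧
    sSup {r : ℝ | ∃ Q ∈ QbarSet T d L M N N le_rfl ℱ S f g h (ℙ.prod PN) α β γ,
        r = supStop T N ℱ φ Q} ≤
      sSup {r : ℝ | ∃ Q ∈ QbarSet T d L M N (N + 1) (Nat.le_succ N) ℱ S f g h
          (ℙ.prod PN1) α β γ, r = ∫ y, extLast T N φ y ∂Q} := by
  obtain ⟨Cφ0, hCφ0⟩ := hφb
  obtain ⟨Cf0, hCf0⟩ := hfb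
  obtain ⟨Cg0, hCg0⟩ := hgb
  obtain ⟨Ch0, hCh0⟩ := hhb
  set Cφ : ℝ := max Cφ0 0 with hCφdef
  have hCφ : ∀ t ω, |φ t ω| ≤ Cφ := fun t ω => le_trans (hCφ0 t ω) (le_max_left _ _)
  have hCφnn : (0 : ℝ) ≤ Cφ := le_max_right _ _
  set Aset := {r : ℝ | ∃ Q ∈ QbarSet T d L M N N le_rfl ℱ S f g h (ℙ.prod PN) α β γ,
      r = supStop T N ℱ φ Q} with hAset
  set Bset := {r : ℝ | ∃ Q ∈ QbarSet T d L M N (N + 1) (Nat.le_succ N) ℱ S f g h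
      (ℙ.prod PN1) α β γ, r = ∫ y, extLast T N φ y ∂Q} with hBset
  have hAbound : ∀ ρ ∈ Aset, -Cφ ≤ ρ ∧ ρ ≤ Cφ := by
    rintro ρ ⟨Q, hQ, rfl⟩
    haveI := hQ.1
    exact (supStop_spec T N ℱ hle φ hφ hCφ Q).1
  have hAne : Aset.Nonempty := by
    obtain ⟨Q, hQ⟩ := hne
    exact ⟨_, Q, hQ, rfl⟩
  have hAbdd : BddAbove Aset := ⟨Cφ, fun ρ hρ => (hAbound ρ hρ).2⟩
  have hAbddb : BddBelow Aset := ⟨-Cφ, fun ρ hρ => (hAbound ρ hρ).1⟩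
  have hBbdd : BddAbove Bset := by
    refine ⟨Cφ, ?_⟩
    rintro ρ ⟨Q, hQ, rfl⟩
    haveI := hQ.1
    exact (abs_le.1 (abs_integral_le_of_bdd fun y : EnlOmega Ω T (N + 1) => hCφ _ y.1)).2
  constructor
  · exact csInf_le_csSup hAne hAbddb hAbdd
  refine csSup_le hAne fun ρ hρ => ?_
  obtain ⟨Q, hQ, rfl⟩ := hρ
  haveI := hQ.1
  unfold supStop
  refine csSup_le ⟨_, fun _ => (0 : Fin (T + 1)), const_stopping T N ℱ 0, rfl⟩ ?_
  rintro s ⟨τ, hτ, rfl⟩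
  set I := ∫ x, φ ((τ x : ℕ)) x.1 ∂Q with hI
  have hstep : ∀ r : ℝ, 0 < r → r < 1 → I - 2 * Cφ * r ≤ sSup Bset := by
    intro r h0 h1
    obtain ⟨ν, hν, hval⟩ := key_step T d L M N ℱ hmono hle ℙ S hS f hf hCf0 g hg hCg0
      h hh hCh0 φ hφ hCφ α β γ PN hfullN PN1 hfullN1 Q hQ τ hτ r h0 h1
    have hmem : ∫ y, extLast T N φ y ∂ν ∈ Bset := ⟨ν, hν, rfl⟩
    refine le_trans ?_ (le_csSup hBbdd hmem)
    rw [hval]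
    have hIb : |I| ≤ Cφ := abs_integral_le_of_bdd fun x => hCφ _ _
    have hTpos : (0 : ℝ) < (T : ℝ) + 1 := by positivity
    have hsum : ((T + 1 : ℕ) : ℝ) * (-Cφ) ≤ ∑ u : Fin (T + 1), ∫ x, φ ((u : ℕ)) x.1 ∂Q := by
      calc ((T + 1 : ℕ) : ℝ) * (-Cφ) = ∑ _u : Fin (T + 1), (-Cφ) := by
            rw [Finset.sum_const, Finset.card_univ, Fintype.card_fin, nsmul_eq_mul]
      _ ≤ _ := Finset.sum_le_sum fun u _ =>
            (abs_le.1 (abs_integral_le_of_bdd fun x => hCφ _ _)).1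
    have hc : (0 : ℝ) ≤ r * ((T : ℝ) + 1)⁻¹ := by positivity
    have hmul := mul_le_mul_of_nonneg_left hsum hc
    have hkey : (r * ((T : ℝ) + 1)⁻¹) * (((T + 1 : ℕ) : ℝ) * (-Cφ)) = r * (-Cφ) := by
      push_cast
      field_simp
    have hrI : r * I ≤ r * Cφ := mul_le_mul_of_nonneg_left (abs_le.1 hIb).2 h0.le
    rw [hkey] at hmul
    nlinarith
  refine le_of_forall_pos_le_add fun ε hε => ?_
  have hd : (0 : ℝ) < 2 * Cφ + 1 := by linarith
  set r : ℝ := min (ε / (2 * Cφ + 1)) (1 / 2) with hr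
  have h0 : 0 < r := lt_min (by positivity) (by norm_num)
  have h1 : r < 1 := lt_of_le_of_lt (min_le_right _ _) (by norm_num)
  have hstep' := hstep r h0 h1
  have hrle : r ≤ ε / (2 * Cφ + 1) := min_le_left _ _
  have h2 : 2 * Cφ * r ≤ ε := by
    have ha : 2 * Cφ * r ≤ 2 * Cφ * (ε / (2 * Cφ + 1)) :=
      mul_le_mul_of_nonneg_left hrle (by linarith)
    have hb : 2 * Cφ / (2 * Cφ + 1) ≤ 1 := by
      rw [div_le_one hd]
      linarith
    have hcalc : 2 * Cφ * (ε / (2 * Cφ + 1)) = (2 * Cφ / (2 * Cφ + 1)) * ε := by ring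
    have hc : (2 * Cφ / (2 * Cφ + 1)) * ε ≤ 1 * ε :=
      mul_le_mul_of_nonneg_right hb hε.le
    linarith [hcalc ▸ ha]
  linarith

end Stmt8
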